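/- arXiv:1703.10503 — 6 statements merged into one kernel-verified Lean document; each statement's English description precedes it below -/
import Mathlib

section
/- For all real numbers x and y, |sin(x)/x - sin(y)/y| ≤ C · ||x| - |y|| · min(|x| + |y|, 1/(|x| + |y|)) for some absolute constant C > 0 (with sin(0)/0 interpreted as 1). -/
/-- The sinc function, extended by continuity to equal `1` at `0`. -/
noncomputable def sinc (x : ℝ) : ℝ := if x = 0 then 1 else Real.sin x / x

lemma mul_sinc (x : ℝ) : x * sinc x = Real.sin x := by
  unfold sinc
  rcases eq_or_ne x 0 with h | h
  · simp [h]
  · rw [if_neg h]; field_simp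

lemma abs_sinc_le_one (x : ℝ) : |sinc x| ≤ 1 := by
  unfold sinc
  rcases eq_or_ne x 0 with h | h
  · simp [h]
  · rw [if_neg h, abs_div, div_le_one (abs_pos.2 h)]
    exact Real.abs_sin_le_abs

lemma sinc_neg (x : ℝ) : sinc (-x) = sinc x := by
  unfold sinc
  rcases eq_or_ne x 0 with h | h
  · simp [h]
  · rw [if_neg (neg_ne_zero.2 h), if_neg h, Real.sin_neg, neg_div_neg_eq]

lemma sinc_abs (x : ℝ) : sinc |x| = sinc x := by
  rcases abs_choice x with h | h <;> rw [h]
  exact sinc_neg x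

lemma abs_one_sub_sinc {y : ℝ} (hy : 0 ≤ y) (hy1 : y ≤ 1) : |1 - sinc y| ≤ y ^ 2 / 4 := by
  rcases eq_or_lt_of_le hy with rfl | hpos
  · simp [sinc]
  have hne : y ≠ 0 := ne_of_gt hpos
  have hsin : Real.sin y ≤ y := by
    calc Real.sin y ≤ |Real.sin y| := le_abs_self _
      _ ≤ |y| := Real.abs_sin_le_abs
      _ = y := abs_of_pos hpos
  have hlow : y - y ^ 3 / 4 < Real.sin y := by
    have h6 := Real.sin_gt_sub_cube hpos; have := pow_pos hpos 3; linarith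
  have hd : sinc y = Real.sin y / y := if_neg hne
  rw [hd, abs_of_nonneg (by rw [sub_nonneg, div_le_one hpos]; exact hsin)]
  have heq : 1 - Real.sin y / y = (y - Real.sin y) / y := by field_simp
  rw [heq, div_le_iff₀ hpos]
  nlinarith [hlow]

lemma sinc_key {x y : ℝ} (hy : 0 ≤ y) (hxy : y ≤ x) :
    |sinc x - sinc y| ≤ 4 * (x - y) * min (x + y) (1 / (x + y)) := by
  rcases eq_or_lt_of_le hxy with rfl | hlt
  · simp
  have hx : 0 < x := lt_of_le_of_lt hy hlt
  have hs : 0 < x + y := by linarith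
  have hb : 0 < x - y := by linarith
  have hid : x * (sinc x - sinc y) = (Real.sin x - Real.sin y) - (x - y) * sinc y := by
    linear_combination mul_sinc x - mul_sinc y
  rcases le_total (x + y) 1 with hs1 | hs1
  · -- small case : min = x + y
    rw [min_eq_left (by rw [le_div_iff₀ hs]; nlinarith : x + y ≤ 1 / (x + y))]
    have hid2 : x * (sinc x - sinc y)
        = 2 * Real.cos ((x + y) / 2) * (Real.sin ((x - y) / 2) - (x - y) / 2)
          + (x - y) * (Real.cos ((x + y) / 2) - sinc y) := by
      linear_combination mul_sinc x - mul_sinc y + Real.sin_sub_sin x y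
    have hbpos : 0 < (x - y) / 2 := by linarith
    have hb1 : (x - y) / 2 ≤ 1 := by linarith
    have hsinb : Real.sin ((x - y) / 2) ≤ (x - y) / 2 := by
      calc Real.sin ((x - y) / 2) ≤ |Real.sin ((x - y) / 2)| := le_abs_self _
        _ ≤ |(x - y) / 2| := Real.abs_sin_le_abs
        _ = (x - y) / 2 := abs_of_pos hbpos
    have h1 : |Real.sin ((x - y) / 2) - (x - y) / 2| ≤ ((x - y) / 2) ^ 3 / 4 := by
      rw [abs_sub_comm, abs_of_nonneg (by linarith)]
      have := Real.sin_gt_sub_cube hbpos; have := pow_pos hbpos 3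
      linarith
    have h2a : |Real.cos ((x + y) / 2) - 1| ≤ ((x + y) / 2) ^ 2 / 2 := by
      rw [abs_of_nonpos (by linarith [Real.cos_le_one ((x + y) / 2)])]
      have := Real.one_sub_sq_div_two_le_cos (x := (x + y) / 2)
      linarith
    have h2 : |Real.cos ((x + y) / 2) - sinc y| ≤ ((x + y) / 2) ^ 2 / 2 + y ^ 2 / 4 := by
      calc |Real.cos ((x + y) / 2) - sinc y|
          ≤ |Real.cos ((x + y) / 2) - 1| + |1 - sinc y| := abs_sub_le _ 1 _
        _ ≤ ((x + y) / 2) ^ 2 / 2 + y ^ 2 / 4 :=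
            add_le_add h2a (abs_one_sub_sinc hy (by linarith))
    have hxd : x * |sinc x - sinc y|
        ≤ 2 * (((x - y) / 2) ^ 3 / 4) + (x - y) * (((x + y) / 2) ^ 2 / 2 + y ^ 2 / 4) := by
      have habs : x * |sinc x - sinc y| = |x * (sinc x - sinc y)| := by
        rw [abs_mul, abs_of_pos hx]
      rw [habs, hid2]
      calc |2 * Real.cos ((x + y) / 2) * (Real.sin ((x - y) / 2) - (x - y) / 2)
              + (x - y) * (Real.cos ((x + y) / 2) - sinc y)|
          ≤ |2 * Real.cos ((x + y) / 2) * (Real.sin ((x - y) / 2) - (x - y) / 2)|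
              + |(x - y) * (Real.cos ((x + y) / 2) - sinc y)| := abs_add_le _ _
        _ ≤ 2 * (((x - y) / 2) ^ 3 / 4) + (x - y) * (((x + y) / 2) ^ 2 / 2 + y ^ 2 / 4) := by
            apply add_le_add
            · rw [abs_mul]
              have hc : |2 * Real.cos ((x + y) / 2)| ≤ 2 := by
                rw [abs_mul, abs_two]
                nlinarith [Real.abs_cos_le_one ((x + y) / 2)]
              exact mul_le_mul hc h1 (abs_nonneg _) (by norm_num)
            · rw [abs_mul, abs_of_pos hb]
              exact mul_le_mul_of_nonneg_left h2 hb.le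
    rw [← mul_le_mul_iff_right₀ hx]
    refine hxd.trans ?_
    nlinarith [mul_nonneg hb.le (sq_nonneg (x + y)), mul_nonneg hb.le (mul_nonneg hy hy),
      mul_nonneg (mul_nonneg hb.le hy) hx.le, mul_nonneg (mul_nonneg hb.le hx.le) hy,
      mul_nonneg hb.le (mul_nonneg hx.le hx.le)]
  · -- large case : min = 1 / (x + y)
    rw [min_eq_right (by rw [div_le_iff₀ hs]; nlinarith : 1 / (x + y) ≤ x + y)]
    have h1 : |Real.sin x - Real.sin y| ≤ x - y := by
      rw [Real.sin_sub_sin, abs_mul, abs_mul, abs_two]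
      have hsb : |Real.sin ((x - y) / 2)| ≤ (x - y) / 2 :=
        Real.abs_sin_le_abs.trans_eq (abs_of_nonneg (by linarith))
      have hca : |Real.cos ((x + y) / 2)| ≤ 1 := Real.abs_cos_le_one _
      nlinarith [abs_nonneg (Real.sin ((x - y) / 2)), abs_nonneg (Real.cos ((x + y) / 2))]
    have h2 : x * |sinc x - sinc y| ≤ 2 * (x - y) := by
      have habs : x * |sinc x - sinc y| = |x * (sinc x - sinc y)| := by
        rw [abs_mul, abs_of_pos hx]
      rw [habs, hid]
      calc |(Real.sin x - Real.sin y) - (x - y) * sinc y|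
          ≤ |Real.sin x - Real.sin y| + |(x - y) * sinc y| := abs_sub _ _
        _ ≤ (x - y) + (x - y) * 1 := by
            apply add_le_add h1
            rw [abs_mul, abs_of_pos hb]
            exact mul_le_mul_of_nonneg_left (abs_sinc_le_one y) hb.le
        _ = 2 * (x - y) := by ring
    rw [mul_one_div, le_div_iff₀ hs]
    nlinarith [h2, mul_nonneg hb.le (abs_nonneg (sinc x - sinc y))]

/-- There is an absolute constant `C > 0` such that for all real `x`, `y`,
`|sin x / x - sin y / y| ≤ C * |(|x| - |y|)| * min (|x| + |y|) (1 / (|x| + |y|))`. -/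
theorem stmt0 :
    ∃ C : ℝ, 0 < C ∧ ∀ x y : ℝ,
      |sinc x - sinc y| ≤ C * |(|x| - |y|)| * min (|x| + |y|) (1 / (|x| + |y|)) := by
  refine ⟨4, by norm_num, fun x y => ?_⟩
  rw [← sinc_abs x, ← sinc_abs y]
  rcases le_total |y| |x| with h | h
  · rw [abs_of_nonneg (sub_nonneg.2 h)]
    exact sinc_key (abs_nonneg y) h
  · rw [abs_sub_comm (sinc |x|), abs_sub_comm |x| |y|, add_comm |x| |y|,
      abs_of_nonneg (sub_nonneg.2 h)]
    exact sinc_key (abs_nonneg x) h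
end

section
/- Let a > 0, b ∈ ℝ, c > 0 with b + c ≥ b - c ≥ 0, and t ≥ 0. Then |(1/c)[ (1/√(b+c))(e^{(-a+√(b+c))t} - e^{(-a-√(b+c))t}) - (1/√(b-c))(e^{(-a+√(b-c))t} - e^{(-a-√(b-c))t}) ]| ≤ C t³ e^{(-a+√(b+c))t} for some absolute constant C. -/
open Real

lemma exp_quad (x : ℝ) (hx : 0 ≤ x) : 1 + x + x^2/2 ≤ Real.exp x := by
  have key : ∀ y : ℝ, HasDerivAt (fun z => Real.exp z - 1 - z - z^2/2)
      (Real.exp y - 1 - y) y := by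
    intro y
    have h := (((Real.hasDerivAt_exp y).sub_const 1).sub (hasDerivAt_id y)).sub
      ((hasDerivAt_pow 2 y).div_const 2)
    refine h.congr_deriv ?_
    simp
  have mono : Monotone (fun z => Real.exp z - 1 - z - z^2/2) := by
    apply monotone_of_deriv_nonneg
    · exact fun y => (key y).differentiableAt
    · intro y
      rw [(key y).deriv]
      have := Real.add_one_le_exp y
      linarith
  have h := mono hx
  simp only [Real.exp_zero] at h
  norm_num at h
  linarith

lemma exp_neg_quad (x : ℝ) (hx : 0 ≤ x) : Real.exp (-x) ≤ 1 - x + x^2/2 := by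
  have key : ∀ y : ℝ, HasDerivAt (fun z => 1 - z + z^2/2 - Real.exp (-z))
      (-1 + y + Real.exp (-y)) y := by
    intro y
    have he : HasDerivAt (fun z : ℝ => Real.exp (-z)) (-Real.exp (-y)) y := by
      have := (Real.hasDerivAt_exp (-y)).comp y (hasDerivAt_neg y)
      exact this.congr_deriv (by ring)
    have h := (((hasDerivAt_const y (1:ℝ)).sub (hasDerivAt_id y)).add
      ((hasDerivAt_pow 2 y).div_const 2)).sub he
    refine h.congr_deriv ?_
    simp
  have mono : Monotone (fun z => 1 - z + z^2/2 - Real.exp (-z)) := by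
    apply monotone_of_deriv_nonneg
    · exact fun y => (key y).differentiableAt
    · intro y
      rw [(key y).deriv]
      have := Real.add_one_le_exp (-y)
      linarith
  have h := mono hx
  simp only [neg_zero, Real.exp_zero] at h
  norm_num at h
  linarith

lemma sinh_le_mul_cosh (x : ℝ) (hx : 0 ≤ x) : Real.sinh x ≤ x * Real.cosh x := by
  have key : ∀ y : ℝ, HasDerivAt (fun z => z * Real.cosh z - Real.sinh z)
      (y * Real.sinh y) y := by
    intro y
    have h := ((hasDerivAt_id y).mul (Real.hasDerivAt_cosh y)).sub (Real.hasDerivAt_sinh y)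
    refine h.congr_deriv ?_
    simp only [id_eq]
    ring
  have mono : Monotone (fun z => z * Real.cosh z - Real.sinh z) := by
    apply monotone_of_deriv_nonneg
    · exact fun y => (key y).differentiableAt
    · intro y
      rw [(key y).deriv]
      rcases le_or_gt 0 y with h | h
      · exact mul_nonneg h (by rwa [Real.sinh_nonneg_iff])
      · nlinarith [Real.sinh_nonpos_iff.mpr h.le]
  have h := mono hx
  simp only [Real.cosh_zero, Real.sinh_zero, mul_one, zero_mul, sub_zero] at h
  norm_num at h
  linarith

lemma cosh_sub_one_le (s : ℝ) (hs : 0 ≤ s) : Real.cosh s - 1 ≤ s^2 * Real.exp s := by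
  have hq := exp_neg_quad s hs
  have hpq : Real.exp (-s) * Real.exp s = 1 := by
    rw [← Real.exp_add]; simp
  have hp1 : 1 ≤ Real.exp s := Real.one_le_exp hs
  have h1 : 1 - s ≤ Real.exp (-s) := by
    have := Real.add_one_le_exp (-s); linarith
  rw [Real.cosh_eq]
  nlinarith [Real.exp_pos s, Real.exp_pos (-s), sq_nonneg s,
    mul_le_mul_of_nonneg_right h1 (Real.exp_pos s).le]

lemma mul_cosh_sub_sinh_le (x : ℝ) (hx : 0 ≤ x) :
    x * Real.cosh x - Real.sinh x ≤ x^3 * Real.exp x := by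
  have hq2 : Real.exp (-x) * Real.exp (-x) ≤ 1 - 2*x + 2*x^2 := by
    have h2 : Real.exp (-x) * Real.exp (-x) = Real.exp (-(2*x)) := by
      rw [← Real.exp_add]; ring_nf
    rw [h2]
    nlinarith [exp_neg_quad (2*x) (by linarith : (0:ℝ) ≤ 2*x)]
  have hpq : Real.exp (-x) * Real.exp x = 1 := by
    rw [← Real.exp_add]; simp
  have key : (x - 1) + (x + 1) * (Real.exp (-x) * Real.exp (-x)) ≤ 2 * x^3 := by
    nlinarith [hq2]
  have k4 : (x-1)*Real.exp x + (x+1)*Real.exp (-x) ≤ 2*x^3*Real.exp x := by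
    have h := mul_le_mul_of_nonneg_right key (Real.exp_pos x).le
    calc (x-1)*Real.exp x + (x+1)*Real.exp (-x)
        = (x-1)*Real.exp x + (x+1)*Real.exp (-x) * (Real.exp (-x)*Real.exp x) := by
          rw [hpq]; ring
      _ = ((x-1) + (x+1)*(Real.exp (-x)*Real.exp (-x))) * Real.exp x := by ring
      _ ≤ 2*x^3*Real.exp x := h
  rw [Real.cosh_eq, Real.sinh_eq]
  nlinarith [k4]
lemma sinh_sub_self_bound (X : ℝ) (hX : 0 < X) :
    0 ≤ Real.sinh X - X ∧ Real.sinh X - X ≤ X^3 * Real.exp X := by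
  obtain ⟨ξ, hξ, hslope⟩ := exists_hasDerivAt_eq_slope Real.sinh Real.cosh hX
    Real.continuous_sinh.continuousOn (fun s _ => Real.hasDerivAt_sinh s)
  rw [Real.sinh_zero, sub_zero, sub_zero] at hslope
  have hsinh : Real.sinh X = X * Real.cosh ξ := by
    rw [hslope]; field_simp
  have hξ0 : 0 < ξ := hξ.1
  have hξX : ξ < X := hξ.2
  have h1 : 1 ≤ Real.cosh ξ := Real.one_le_cosh ξ
  constructor
  · nlinarith
  · have h2 : Real.cosh ξ - 1 ≤ ξ^2 * Real.exp ξ := cosh_sub_one_le ξ hξ0.le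
    have h3 : Real.exp ξ ≤ Real.exp X := Real.exp_le_exp.mpr hξX.le
    have h4 : ξ^2 ≤ X^2 := by nlinarith
    have h5 : ξ^2 * Real.exp ξ ≤ X^2 * Real.exp X :=
      mul_le_mul h4 h3 (Real.exp_pos ξ).le (by positivity)
    nlinarith [mul_le_mul_of_nonneg_left h2 hX.le, mul_le_mul_of_nonneg_left h5 hX.le]

lemma slope_div_bound (Y X : ℝ) (hY : 0 < Y) (hXY : Y < X) :
    0 ≤ Real.sinh X / X - Real.sinh Y / Y ∧
    Real.sinh X / X - Real.sinh Y / Y ≤ X * Real.exp X * (X - Y) := by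
  have hX : 0 < X := hY.trans hXY
  obtain ⟨ξ, hξ, hslope⟩ := exists_hasDerivAt_eq_slope (fun s => Real.sinh s / s)
    (fun s => (Real.cosh s * s - Real.sinh s * 1) / s^2) hXY
    (ContinuousOn.div Real.continuous_sinh.continuousOn continuousOn_id
      (fun s hs => by have : (0:ℝ) < s := lt_of_lt_of_le hY hs.1; exact ne_of_gt this))
    (fun s hs => by
      have hs0 : s ≠ 0 := ne_of_gt (hY.trans hs.1)
      exact (Real.hasDerivAt_sinh s).div (hasDerivAt_id s) hs0)
  have hξ0 : 0 < ξ := hY.trans hξ.1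
  have hξX : ξ < X := hξ.2
  have hdiff : Real.sinh X / X - Real.sinh Y / Y
      = (Real.cosh ξ * ξ - Real.sinh ξ * 1) / ξ^2 * (X - Y) := by
    rw [hslope, div_mul_cancel₀]
    exact ne_of_gt (by linarith : (0:ℝ) < X - Y)
  have hnum0 : 0 ≤ Real.cosh ξ * ξ - Real.sinh ξ * 1 := by
    have := sinh_le_mul_cosh ξ hξ0.le
    nlinarith
  have hsq : (0:ℝ) < ξ^2 := by positivity
  constructor
  · rw [hdiff]
    exact mul_nonneg (div_nonneg hnum0 hsq.le) (by linarith)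
  · rw [hdiff]
    apply mul_le_mul_of_nonneg_right _ (by linarith : (0:ℝ) ≤ X - Y)
    rw [div_le_iff₀ hsq]
    have h1 := mul_cosh_sub_sinh_le ξ hξ0.le
    have h3 : Real.exp ξ ≤ Real.exp X := Real.exp_le_exp.mpr hξX.le
    have h5 : ξ * Real.exp ξ ≤ X * Real.exp X :=
      mul_le_mul hξX.le h3 (Real.exp_pos ξ).le hX.le
    nlinarith [mul_le_mul_of_nonneg_right h5 hsq.le]

/-- Lemma A.1 of the paper, case `b + c ≥ b - c ≥ 0`: there is an absolute constant `C` with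
`|I| ≤ C t³ e^{(-a+√(b+c))t}`, where in the degenerate case `b - c = 0` the quotient
`(1/√(b-c))(e^{(-a+√(b-c))t} - e^{(-a-√(b-c))t})` is interpreted as its limit `2 t e^{-at}`. -/
theorem stmt2 :
    ∃ C : ℝ, 0 < C ∧ ∀ a b c t : ℝ, 0 < a → 0 < c → 0 ≤ b - c → 0 ≤ t →
      |(1 / c) * ((1 / Real.sqrt (b + c)) *
          (Real.exp ((-a + Real.sqrt (b + c)) * t) - Real.exp ((-a - Real.sqrt (b + c)) * t))
        - (if b = c then 2 * t * Real.exp (-a * t)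
            else (1 / Real.sqrt (b - c)) *
              (Real.exp ((-a + Real.sqrt (b - c)) * t)
                - Real.exp ((-a - Real.sqrt (b - c)) * t))))|
      ≤ C * t ^ 3 * Real.exp ((-a + Real.sqrt (b + c)) * t) := by
  refine ⟨4, by norm_num, ?_⟩
  intro a b c t ha hc hbc ht
  set u := Real.sqrt (b + c) with hu_def
  set v := Real.sqrt (b - c) with hv_def
  have hbc2 : 0 < b + c := by nlinarith
  have hu2 : u ^ 2 = b + c := Real.sq_sqrt hbc2.le
  have hv2 : v ^ 2 = b - c := Real.sq_sqrt hbc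
  have hu : 0 < u := Real.sqrt_pos.mpr hbc2
  have hv0 : 0 ≤ v := Real.sqrt_nonneg _
  have huv : v < u := Real.sqrt_lt_sqrt hbc (by linarith)
  rcases ht.eq_or_lt with h0 | ht0
  · rw [← h0]
    split_ifs <;> simp
  -- t > 0
  have hP : 0 < Real.exp (-(a*t)) := Real.exp_pos _
  have hee : ∀ w : ℝ, Real.exp ((-a + w) * t) = Real.exp (-(a*t)) * Real.exp (w*t) := by
    intro w; rw [← Real.exp_add]; ring_nf
  have hee2 : ∀ w : ℝ, Real.exp ((-a - w) * t) = Real.exp (-(a*t)) * Real.exp (-(w*t)) := by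
    intro w; rw [← Real.exp_add]; ring_nf
  by_cases hbceq : b = c
  · -- degenerate case
    rw [if_pos hbceq]
    obtain ⟨h1, h2⟩ := sinh_sub_self_bound (u*t) (mul_pos hu ht0)
    have heq : (1 / c) * ((1 / u) * (Real.exp ((-a + u) * t) - Real.exp ((-a - u) * t))
        - 2 * t * Real.exp (-a * t))
        = Real.exp (-(a*t)) * ((2 / (c*u)) * (Real.sinh (u*t) - u*t)) := by
      rw [hee u, hee2 u, show Real.exp (-a*t) = Real.exp (-(a*t)) by ring_nf, Real.sinh_eq]
      field_simp
    have hu2c : u ^ 2 = 2 * c := by rw [hu2, hbceq]; ring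
    have key : (2 / (c*u)) * (Real.sinh (u*t) - u*t) ≤ 4 * t^3 * Real.exp (u*t) := by
      calc (2 / (c*u)) * (Real.sinh (u*t) - u*t)
          ≤ (2 / (c*u)) * ((u*t)^3 * Real.exp (u*t)) :=
            mul_le_mul_of_nonneg_left h2 (by positivity)
        _ = (u^2 / c) * (2 * t^3 * Real.exp (u*t)) := by
            field_simp
        _ = 4 * t^3 * Real.exp (u*t) := by
            rw [hu2c]
            field_simp
            ring
    rw [heq, abs_of_nonneg (mul_nonneg hP.le (mul_nonneg (by positivity) h1)), hee u]
    calc Real.exp (-(a*t)) * ((2 / (c*u)) * (Real.sinh (u*t) - u*t))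
        ≤ Real.exp (-(a*t)) * (4 * t^3 * Real.exp (u*t)) :=
          mul_le_mul_of_nonneg_left key hP.le
      _ = 4 * t^3 * (Real.exp (-(a*t)) * Real.exp (u*t)) := by ring
  · -- non-degenerate case
    rw [if_neg hbceq]
    have hbcpos : 0 < b - c := lt_of_le_of_ne hbc (fun h => hbceq (by linarith))
    have hvpos : 0 < v := Real.sqrt_pos.mpr hbcpos
    have hY : 0 < v * t := mul_pos hvpos ht0
    have hXY : v * t < u * t := by nlinarith
    obtain ⟨hD0, hD⟩ := slope_div_bound (v*t) (u*t) hY hXY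
    have heq : (1 / c) * ((1 / u) * (Real.exp ((-a + u) * t) - Real.exp ((-a - u) * t))
        - (1 / v) * (Real.exp ((-a + v) * t) - Real.exp ((-a - v) * t)))
        = Real.exp (-(a*t)) * ((2 * t / c) *
            (Real.sinh (u*t) / (u*t) - Real.sinh (v*t) / (v*t))) := by
      rw [hee u, hee2 u, hee v, hee2 v, Real.sinh_eq, Real.sinh_eq]
      field_simp
    have h2c : u * (u - v) / c ≤ 2 := by
      rw [div_le_iff₀ hc]
      nlinarith [mul_nonneg hv0 (sub_nonneg.mpr huv.le)]
    have key : (2 * t / c) * (Real.sinh (u*t) / (u*t) - Real.sinh (v*t) / (v*t))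
        ≤ 4 * t^3 * Real.exp (u*t) := by
      calc (2 * t / c) * (Real.sinh (u*t) / (u*t) - Real.sinh (v*t) / (v*t))
          ≤ (2 * t / c) * (u*t * Real.exp (u*t) * (u*t - v*t)) :=
            mul_le_mul_of_nonneg_left hD (by positivity)
        _ = (u * (u - v) / c) * (2 * t^3 * Real.exp (u*t)) := by ring
        _ ≤ 2 * (2 * t^3 * Real.exp (u*t)) :=
            mul_le_mul_of_nonneg_right h2c (by positivity)
        _ = 4 * t^3 * Real.exp (u*t) := by ring
    rw [heq, abs_of_nonneg (mul_nonneg hP.le (mul_nonneg (by positivity) hD0)), hee u]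
    calc Real.exp (-(a*t)) * ((2 * t / c) *
            (Real.sinh (u*t) / (u*t) - Real.sinh (v*t) / (v*t)))
        ≤ Real.exp (-(a*t)) * (4 * t^3 * Real.exp (u*t)) :=
          mul_le_mul_of_nonneg_left key hP.le
      _ = 4 * t^3 * (Real.exp (-(a*t)) * Real.exp (u*t)) := by ring
end

section
/- Let c > 0, α ∈ ℝ, β > -1, and N > 0. There exists a constant C = C(c, α, β) such that for all t ≥ 0: ∬_{N/2 ≤ √(ξ²+η²) ≤ 2N} |ξ|^β (ξ²+η²)^{-α/2} e^{-c ξ² t/(ξ²+η²)} dξ dη ≤ C N^{β+2-α} (1+t)^{-(1+β)/2}. -/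
open MeasureTheory Real Set

lemma my_integrable_abs_rpow_mul_exp_neg_mul_sq {b s : ℝ} (hb : 0 < b) (hs : -1 < s) :
    Integrable fun x : ℝ => |x| ^ s * Real.exp (-b * x ^ 2) := by
  have h1 := integrableOn_rpow_mul_exp_neg_mul_sq hb hs
  have hIoi : IntegrableOn (fun x : ℝ => |x| ^ s * Real.exp (-b * x ^ 2)) (Ioi 0) := by
    apply h1.congr_fun (fun x hx => ?_) measurableSet_Ioi
    rw [abs_of_pos (mem_Ioi.mp hx)]
  have hIic : IntegrableOn (fun x : ℝ => |x| ^ s * Real.exp (-b * x ^ 2)) (Iic 0) := by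
    rw [← Measure.map_neg_eq_self (volume : Measure ℝ)]
    have m : MeasurableEmbedding fun x : ℝ => -x := (Homeomorph.neg ℝ).measurableEmbedding
    rw [m.integrableOn_map_iff]
    simp_rw [Function.comp_def, abs_neg, neg_preimage, neg_Iic, neg_zero, neg_sq]
    exact (integrableOn_Ici_iff_integrableOn_Ioi).mpr hIoi
  rw [← integrableOn_univ, ← Iic_union_Ioi (a := (0:ℝ)), integrableOn_union]
  exact ⟨hIic, hIoi⟩

lemma my_scaling {b : ℝ} (s : ℝ) (hb : 0 < b) :
    (∫ x : ℝ, |x| ^ s * Real.exp (-b * x ^ 2))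
      = (Real.sqrt b) ^ (-(s + 1)) * ∫ x : ℝ, |x| ^ s * Real.exp (-x ^ 2) := by
  have ha : 0 < Real.sqrt b := Real.sqrt_pos.2 hb
  have key := MeasureTheory.Measure.integral_comp_mul_left
    (fun y : ℝ => |y| ^ s * Real.exp (-y ^ 2)) (Real.sqrt b)
  have hfun : (fun x : ℝ => |Real.sqrt b * x| ^ s * Real.exp (-(Real.sqrt b * x) ^ 2))
      = fun x : ℝ => (Real.sqrt b) ^ s * (|x| ^ s * Real.exp (-b * x ^ 2)) := by
    funext x
    rw [abs_mul, abs_of_pos ha, Real.mul_rpow ha.le (abs_nonneg x), mul_pow,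
      Real.sq_sqrt hb.le]
    ring
  rw [hfun, MeasureTheory.integral_const_mul, abs_of_pos (inv_pos.2 ha), smul_eq_mul] at key
  have hbs : (Real.sqrt b) ^ s ≠ 0 := (Real.rpow_pos_of_pos ha s).ne'
  have : (∫ x : ℝ, |x| ^ s * Real.exp (-b * x ^ 2))
      = ((Real.sqrt b) ^ s)⁻¹ * ((Real.sqrt b)⁻¹ * ∫ x : ℝ, |x| ^ s * Real.exp (-x ^ 2)) := by
    field_simp at key ⊢
    linarith [key]
  rw [this, Real.rpow_neg ha.le, Real.rpow_add ha, Real.rpow_one, mul_inv]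
  ring

set_option maxHeartbeats 1000000 in
/-- For `c > 0`, `α ∈ ℝ`, `β > -1` there is `C = C(c, α, β)` such that for every dyadic scale
`N > 0` and every `t ≥ 0`,
`∬_{N/2 ≤ A ≤ 2N} |ξ|^β A^{-α} e^{-c ξ² t / A²} dξ dη ≤ C N^{β+2-α} (1+t)^{-(1+β)/2}`,
where `A = √(ξ²+η²)`. -/
theorem stmt4 (c α β : ℝ) (hc : 0 < c) (hβ : -1 < β) :
    ∃ C : ℝ, 0 < C ∧ ∀ N : ℝ, 0 < N → ∀ t : ℝ, 0 ≤ t →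
      (∫ p in {p : ℝ × ℝ | N / 2 ≤ Real.sqrt (p.1 ^ 2 + p.2 ^ 2) ∧
            Real.sqrt (p.1 ^ 2 + p.2 ^ 2) ≤ 2 * N},
          |p.1| ^ β * (p.1 ^ 2 + p.2 ^ 2) ^ (-α / 2) *
            Real.exp (-c * p.1 ^ 2 * t / (p.1 ^ 2 + p.2 ^ 2)))
        ≤ C * N ^ (β + 2 - α) * (1 + t) ^ (-(1 + β) / 2) := by
  set K1 : ℝ := (2:ℝ) ^ α + (2:ℝ) ^ (-α) with hK1def
  have hK1 : 0 < K1 := by positivity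
  set m : ℝ := min c 1 with hmdef
  have hm : 0 < m := lt_min hc one_pos
  have hm1 : m ≤ 1 := min_le_right c 1
  have hmc : m ≤ c := min_le_left c 1
  set Cβ : ℝ := ∫ x : ℝ, |x| ^ β * Real.exp (-x ^ 2) with hCβdef
  have hCβ0 : 0 ≤ Cβ := integral_nonneg fun x => by positivity
  refine ⟨max (K1 * 4 * Real.exp 1 * (m / 4) ^ (-(β + 1) / 2) * Cβ) 1,
    lt_max_of_lt_right one_pos, fun N hN t ht => ?_⟩
  set C : ℝ := max (K1 * 4 * Real.exp 1 * (m / 4) ^ (-(β + 1) / 2) * Cβ) 1 with hCdef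
  set S : Set (ℝ × ℝ) := {p : ℝ × ℝ | N / 2 ≤ Real.sqrt (p.1 ^ 2 + p.2 ^ 2) ∧
      Real.sqrt (p.1 ^ 2 + p.2 ^ 2) ≤ 2 * N} with hSdef
  set I : Set ℝ := Icc (-(2 * N)) (2 * N) with hIdef
  set s₀ : ℝ := c * t / (4 * N ^ 2) with hs₀def
  have hs₀ : 0 ≤ s₀ := by positivity
  set lam : ℝ := m * (1 + t) / (4 * N ^ 2) with hlamdef
  have hlam : 0 < lam := by positivity
  set f : ℝ × ℝ → ℝ := fun p => |p.1| ^ β * (p.1 ^ 2 + p.2 ^ 2) ^ (-α / 2) *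
      Real.exp (-c * p.1 ^ 2 * t / (p.1 ^ 2 + p.2 ^ 2)) with hfdef
  set h : ℝ → ℝ := fun x => |x| ^ β * Real.exp (-s₀ * x ^ 2) with hhdef
  set φ : ℝ → ℝ := fun x => Real.exp 1 * (|x| ^ β * Real.exp (-lam * x ^ 2)) with hφdef
  set G : ℝ × ℝ → ℝ := fun p => K1 * N ^ (-α) * h p.1 with hGdef
  -- measurability of S
  have hAm : Measurable fun p : ℝ × ℝ => Real.sqrt (p.1 ^ 2 + p.2 ^ 2) := by
    fun_prop
  have hS_meas : MeasurableSet S := by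
    have : S = {p : ℝ × ℝ | N / 2 ≤ Real.sqrt (p.1 ^ 2 + p.2 ^ 2)} ∩
        {p : ℝ × ℝ | Real.sqrt (p.1 ^ 2 + p.2 ^ 2) ≤ 2 * N} := rfl
    rw [this]
    exact (measurableSet_le measurable_const hAm).inter (measurableSet_le hAm measurable_const)
  -- S ⊆ I ×ˢ I
  have hSR : S ⊆ I ×ˢ I := by
    rintro ⟨x, y⟩ ⟨h1, h2⟩
    have hx : |x| ≤ 2 * N := by
      have : Real.sqrt (x ^ 2) ≤ Real.sqrt (x ^ 2 + y ^ 2) :=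
        Real.sqrt_le_sqrt (by nlinarith [sq_nonneg y])
      rw [Real.sqrt_sq_eq_abs] at this
      linarith
    have hy : |y| ≤ 2 * N := by
      have : Real.sqrt (y ^ 2) ≤ Real.sqrt (x ^ 2 + y ^ 2) :=
        Real.sqrt_le_sqrt (by nlinarith [sq_nonneg x])
      rw [Real.sqrt_sq_eq_abs] at this
      linarith
    exact ⟨abs_le.1 hx, abs_le.1 hy⟩
  -- pointwise bound on S
  have hfG : ∀ p ∈ S, f p ≤ G p := by
    rintro ⟨x, y⟩ ⟨h1, h2⟩
    set A : ℝ := x ^ 2 + y ^ 2 with hAdef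
    have hA0 : 0 ≤ A := by positivity
    have hA4 : A ≤ 4 * N ^ 2 := by
      nlinarith [Real.sq_sqrt hA0, Real.sqrt_nonneg A]
    have hApos : 0 < A := by
      nlinarith [Real.sq_sqrt hA0]
    have hB1 : A ^ (-α / 2) ≤ K1 * N ^ (-α) := by
      have hAexp : A ^ (-α / 2) = (Real.sqrt A) ^ (-α) := by
        conv_lhs => rw [← Real.sq_sqrt hA0]
        rw [← Real.rpow_natCast (Real.sqrt A) 2, ← Real.rpow_mul (Real.sqrt_nonneg A)]
        congr 1
        push_cast
        ring
      rw [hAexp]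
      rcases le_total 0 α with hα | hα
      · have hstep : (Real.sqrt A) ^ (-α) ≤ (N / 2) ^ (-α) :=
          Real.rpow_le_rpow_of_nonpos (by positivity) h1 (by linarith)
        have heq : (N / 2) ^ (-α) = (2:ℝ) ^ α * N ^ (-α) := by
          rw [Real.div_rpow hN.le (by norm_num), Real.rpow_neg (by norm_num : (0:ℝ) ≤ 2)]
          field_simp
        have h2N : (0:ℝ) ≤ (2:ℝ) ^ (-α) * N ^ (-α) := by positivity
        rw [heq] at hstep
        rw [hK1def]
        nlinarith [hstep, h2N]
      · have hstep : (Real.sqrt A) ^ (-α) ≤ (2 * N) ^ (-α) :=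
          Real.rpow_le_rpow (Real.sqrt_nonneg A) h2 (by linarith)
        have heq : (2 * N) ^ (-α) = (2:ℝ) ^ (-α) * N ^ (-α) :=
          Real.mul_rpow (by norm_num) hN.le
        have h2N : (0:ℝ) ≤ (2:ℝ) ^ α * N ^ (-α) := by positivity
        rw [heq] at hstep
        rw [hK1def]
        nlinarith [hstep, h2N]
    have hB2 : Real.exp (-c * x ^ 2 * t / A) ≤ Real.exp (-s₀ * x ^ 2) := by
      apply Real.exp_le_exp.2
      have hnum : 0 ≤ c * x ^ 2 * t := by positivity
      have : c * x ^ 2 * t / (4 * N ^ 2) ≤ c * x ^ 2 * t / A :=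
        div_le_div_of_nonneg_left hnum hApos hA4
      have heq : -s₀ * x ^ 2 = -(c * x ^ 2 * t / (4 * N ^ 2)) := by
        rw [hs₀def]; ring
      rw [heq]
      have : -(c * x ^ 2 * t / A) ≤ -(c * x ^ 2 * t / (4 * N ^ 2)) := by linarith
      calc -c * x ^ 2 * t / A = -(c * x ^ 2 * t / A) := by ring
        _ ≤ -(c * x ^ 2 * t / (4 * N ^ 2)) := this
    have habs : (0:ℝ) ≤ |x| ^ β := by positivity
    calc f (x, y) = |x| ^ β * A ^ (-α / 2) * Real.exp (-c * x ^ 2 * t / A) := rfl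
      _ ≤ (|x| ^ β * (K1 * N ^ (-α))) * Real.exp (-s₀ * x ^ 2) := by
          apply mul_le_mul (mul_le_mul_of_nonneg_left hB1 habs) hB2 (Real.exp_pos _).le
          positivity
      _ = G (x, y) := by rw [hGdef, hhdef]; ring
  -- pointwise bound on I
  have hhφ : ∀ x ∈ I, h x ≤ φ x := by
    intro x hx
    have hx2 : x ^ 2 ≤ 4 * N ^ 2 := by
      rcases hx with ⟨hl, hr⟩
      nlinarith
    have key : (lam - s₀) * x ^ 2 ≤ 1 := by
      have hd : lam - s₀ = (m * (1 + t) - c * t) / (4 * N ^ 2) := by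
        rw [hlamdef, hs₀def]; ring
      have h1 : m * (1 + t) - c * t ≤ 1 := by nlinarith
      rcases le_or_gt (m * (1 + t) - c * t) 0 with hd0 | hd0
      · have : (lam - s₀) * x ^ 2 ≤ 0 :=
          mul_nonpos_of_nonpos_of_nonneg (by rw [hd]; exact div_nonpos_of_nonpos_of_nonneg hd0 (by positivity)) (sq_nonneg x)
        linarith
      · rw [hd, div_mul_eq_mul_div, div_le_one (by positivity)]
        nlinarith [sq_nonneg x]
    have hexp : Real.exp (-s₀ * x ^ 2) ≤ Real.exp 1 * Real.exp (-lam * x ^ 2) := by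
      rw [← Real.exp_add]
      apply Real.exp_le_exp.2
      linarith
    calc h x = |x| ^ β * Real.exp (-s₀ * x ^ 2) := rfl
      _ ≤ |x| ^ β * (Real.exp 1 * Real.exp (-lam * x ^ 2)) :=
          mul_le_mul_of_nonneg_left hexp (by positivity)
      _ = φ x := by rw [hφdef]; ring
  -- integrability
  have hφint : Integrable φ := by
    rw [hφdef]
    exact (my_integrable_abs_rpow_mul_exp_neg_mul_sq hlam hβ).const_mul _
  have hh_meas : Measurable h := by
    rw [hhdef]; fun_prop
  have hhI : IntegrableOn h I := by
    apply Integrable.mono' hφint.integrableOn hh_meas.aestronglyMeasurable.restrict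
    filter_upwards [ae_restrict_mem (measurableSet_Icc : MeasurableSet I)] with x hx
    rw [Real.norm_eq_abs, abs_of_nonneg (by rw [hhdef]; positivity)]
    exact hhφ x hx
  have hhRfst : IntegrableOn (fun p : ℝ × ℝ => h p.1) (I ×ˢ I) := by
    have h1 : IntegrableOn (fun p : ℝ × ℝ => h p.1 * (1:ℝ)) (I ×ˢ I) := by
      rw [IntegrableOn, Measure.volume_eq_prod, ← Measure.prod_restrict]
      exact Integrable.mul_prod hhI (integrableOn_const measure_Icc_lt_top.ne)
    simpa using h1
  have hGR : IntegrableOn G (I ×ˢ I) := by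
    rw [hGdef]
    exact hhRfst.const_mul _
  have hGS : IntegrableOn G S := hGR.mono_set hSR
  have hf_meas : Measurable f := by
    rw [hfdef]; fun_prop
  have hfS : IntegrableOn f S := by
    apply Integrable.mono' hGS hf_meas.aestronglyMeasurable.restrict
    filter_upwards [ae_restrict_mem hS_meas] with p hp
    rw [Real.norm_eq_abs, abs_of_nonneg (by rw [hfdef]; positivity)]
    exact hfG p hp
  -- the chain
  have hIvol : (volume I).toReal = 4 * N := by
    rw [hIdef, Real.volume_Icc, ENNReal.toReal_ofReal (by linarith)]
    ring
  have step1 : (∫ p in S, f p) ≤ ∫ p in S, G p :=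
    setIntegral_mono_on hfS hGS hS_meas hfG
  have hG0 : ∀ p : ℝ × ℝ, 0 ≤ G p := fun p => by
    rw [hGdef, hhdef]; positivity
  have step2 : (∫ p in S, G p) ≤ ∫ p in I ×ˢ I, G p :=
    setIntegral_mono_set hGR (Filter.Eventually.of_forall hG0) (HasSubset.Subset.eventuallyLE hSR)
  have step3 : (∫ p in I ×ˢ I, G p) = K1 * N ^ (-α) * ((∫ x in I, h x) * (4 * N)) := by
    rw [hGdef]
    rw [MeasureTheory.integral_const_mul]
    congr 1
    have : (∫ p in I ×ˢ I, h p.1) = ∫ p in I ×ˢ I, h p.1 * (fun _ : ℝ => (1:ℝ)) p.2 := by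
      simp
    rw [this, Measure.volume_eq_prod, setIntegral_prod_mul h (fun _ : ℝ => (1:ℝ)) I I]
    rw [setIntegral_const, measureReal_def, hIvol]
    simp
  have step4 : (∫ x in I, h x) ≤ Real.exp 1 * ((Real.sqrt lam) ^ (-(β + 1)) * Cβ) := by
    calc (∫ x in I, h x) ≤ ∫ x in I, φ x :=
          setIntegral_mono_on hhI hφint.integrableOn measurableSet_Icc hhφ
      _ ≤ ∫ x, φ x := setIntegral_le_integral hφint
          (Filter.Eventually.of_forall fun x => by rw [hφdef]; positivity)
      _ = Real.exp 1 * ((Real.sqrt lam) ^ (-(β + 1)) * Cβ) := by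
          rw [hφdef, MeasureTheory.integral_const_mul, my_scaling β hlam, hCβdef]
  -- the sqrt-lambda identity
  have h1t : (0:ℝ) < 1 + t := by linarith
  have hlam_id : (Real.sqrt lam) ^ (-(β + 1))
      = (m / 4) ^ (-(β + 1) / 2) * (1 + t) ^ (-(β + 1) / 2) * N ^ (β + 1) := by
    rw [Real.sqrt_eq_rpow, ← Real.rpow_mul hlam.le]
    have he : 1 / 2 * (-(β + 1)) = -(β + 1) / 2 := by ring
    rw [he]
    have hfact : lam = (m / 4) * ((1 + t) / N ^ 2) := by
      rw [hlamdef]; field_simp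
    rw [hfact, Real.mul_rpow (by positivity) (by positivity),
      Real.div_rpow (by positivity) (by positivity),
      Real.div_rpow (by positivity) (by positivity)]
    have hNsq : ((N ^ 2 : ℝ)) ^ (-(β + 1) / 2) = (N ^ (β + 1))⁻¹ := by
      rw [← Real.rpow_natCast N 2, ← Real.rpow_mul hN.le]
      rw [show (2:ℕ) * (-(β + 1) / 2) = -(β+1) by push_cast; ring]
      exact Real.rpow_neg hN.le _
    rw [hNsq, div_inv_eq_mul]
    ring
  -- exponent algebra for N
  have hNexp : N ^ (-α) * N ^ (β + 1) * N = N ^ (β + 2 - α) := by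
    nth_rewrite 3 [← Real.rpow_one N]
    rw [← Real.rpow_add hN, ← Real.rpow_add hN]
    congr 1; ring
  have hEexp : (-(1 + β) / 2 : ℝ) = -(β + 1) / 2 := by ring
  -- final assembly
  have hfinal : K1 * N ^ (-α) *
      ((Real.exp 1 * ((Real.sqrt lam) ^ (-(β + 1)) * Cβ)) * (4 * N))
      = (K1 * 4 * Real.exp 1 * (m / 4) ^ (-(β + 1) / 2) * Cβ)
        * (N ^ (β + 2 - α) * (1 + t) ^ (-(β + 1) / 2)) := by
    rw [hlam_id, ← hNexp]
    ring
  calc (∫ p in S, f p) ≤ ∫ p in I ×ˢ I, G p := le_trans step1 step2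
    _ = K1 * N ^ (-α) * ((∫ x in I, h x) * (4 * N)) := step3
    _ ≤ K1 * N ^ (-α) * ((Real.exp 1 * ((Real.sqrt lam) ^ (-(β + 1)) * Cβ)) * (4 * N)) := by
        apply mul_le_mul_of_nonneg_left _ (by positivity)
        exact mul_le_mul_of_nonneg_right step4 (by positivity)
    _ = (K1 * 4 * Real.exp 1 * (m / 4) ^ (-(β + 1) / 2) * Cβ)
        * (N ^ (β + 2 - α) * (1 + t) ^ (-(β + 1) / 2)) := hfinal
    _ ≤ C * (N ^ (β + 2 - α) * (1 + t) ^ (-(β + 1) / 2)) := by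
        apply mul_le_mul_of_nonneg_right (le_max_left _ _)
        positivity
    _ = C * N ^ (β + 2 - α) * (1 + t) ^ (-(1 + β) / 2) := by
        rw [hEexp]; ring
end

section
/- Let c > 0, β ≥ 0, α ∈ ℝ, β' ≥ β with 2β' - β + 1 - α > 0. There exists C such that for all t ≥ 0: sup over ξ of ∫ over η of the function χ_{|ξ| ≤ A²} |ξ|^{β'} A^{-α} e^{-c ξ² t / A²} dη, restricted to the region A = √(ξ²+η²) ≤ 1, is bounded by C (1+t)^{-β/2}. -/
open MeasureTheory


lemma aux_sq_rpow (x p : ℝ) : (x^2) ^ (p/2) = |x| ^ p := by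
  rw [← sq_abs, ← Real.rpow_natCast |x| 2, ← Real.rpow_mul (abs_nonneg x)]
  norm_num
  congr 1
  ring

lemma aux_exp_bound (β : ℝ) : ∃ C₁ : ℝ, 1 ≤ C₁ ∧ ∀ x : ℝ, 0 ≤ x →
    Real.exp (-x) ≤ C₁ * (1+x) ^ (-(β/2)) := by
  set n : ℕ := ⌈β/2⌉₊ with hn
  refine ⟨(n.factorial : ℝ) * Real.exp 1, ?_, ?_⟩
  · have h1 : (1:ℝ) ≤ (n.factorial : ℝ) := by exact_mod_cast n.factorial_pos
    nlinarith [Real.add_one_le_exp 1, Real.exp_pos 1]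
  · intro x hx
    have h1x : (1:ℝ) ≤ 1 + x := by linarith
    have hpos : (0:ℝ) < (1+x) ^ (β/2) := Real.rpow_pos_of_pos (by linarith) _
    have e1 : (1+x) ^ (β/2) ≤ (1+x) ^ (n:ℝ) :=
      Real.rpow_le_rpow_of_exponent_le h1x (Nat.le_ceil _)
    have e3 : (1+x)^n ≤ (n.factorial : ℝ) * Real.exp (1+x) := by
      have h := Real.pow_div_factorial_le_exp (1+x) (by linarith) n
      have hf : (0:ℝ) < (n.factorial : ℝ) := by exact_mod_cast n.factorial_pos
      rw [div_le_iff₀ hf] at h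
      linarith
    have e4 : (1+x) ^ (β/2) ≤ (n.factorial : ℝ) * Real.exp 1 * Real.exp x := by
      rw [Real.rpow_natCast] at e1
      calc (1+x) ^ (β/2) ≤ ((1+x):ℝ)^n := e1
        _ ≤ (n.factorial : ℝ) * Real.exp (1+x) := e3
        _ = (n.factorial : ℝ) * Real.exp 1 * Real.exp x := by
            rw [Real.exp_add]; ring
    rw [Real.exp_neg, Real.rpow_neg (by linarith)]
    have hinv : (Real.exp x)⁻¹ * Real.exp x = 1 := inv_mul_cancel₀ (ne_of_gt (Real.exp_pos x))
    have hinv2 : ((1+x) ^ (β/2))⁻¹ * (1+x) ^ (β/2) = 1 := inv_mul_cancel₀ (ne_of_gt hpos)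
    have h5 : (Real.exp x)⁻¹ * (1+x) ^ (β/2) ≤ (n.factorial : ℝ) * Real.exp 1 := by
      have := mul_le_mul_of_nonneg_left e4 (inv_nonneg.mpr (Real.exp_pos x).le)
      calc (Real.exp x)⁻¹ * (1+x) ^ (β/2)
          ≤ (Real.exp x)⁻¹ * ((n.factorial : ℝ) * Real.exp 1 * Real.exp x) := this
        _ = ((Real.exp x)⁻¹ * Real.exp x) * ((n.factorial : ℝ) * Real.exp 1) := by ring
        _ = (n.factorial : ℝ) * Real.exp 1 := by rw [hinv]; ring
    calc (Real.exp x)⁻¹ = ((Real.exp x)⁻¹ * (1+x) ^ (β/2)) * ((1+x) ^ (β/2))⁻¹ := by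
          rw [mul_assoc, mul_comm ((1+x) ^ (β/2)), hinv2, mul_one]
      _ ≤ ((n.factorial : ℝ) * Real.exp 1) * ((1+x) ^ (β/2))⁻¹ :=
          mul_le_mul_of_nonneg_right h5 (inv_nonneg.mpr hpos.le)

lemma aux_G_integrable {δ : ℝ} (hδ : -1 < δ) :
    IntegrableOn (fun η : ℝ => 1 + (η^2) ^ (δ/2)) (Set.Icc (-1:ℝ) 1) := by
  have habs : IntegrableOn (fun η : ℝ => |η| ^ δ) (Set.Icc (-1:ℝ) 1) := by
    have h01 : IntervalIntegrable (fun η : ℝ => |η| ^ δ) volume 0 1 := by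
      rw [intervalIntegrable_iff_integrableOn_Ioc_of_le zero_le_one]
      refine IntegrableOn.congr_fun ?_ (fun x hx => by
        rw [abs_of_pos hx.1]) measurableSet_Ioc
      exact (intervalIntegral.intervalIntegrable_rpow' hδ).1
    have hneg : IntervalIntegrable (fun η : ℝ => |η| ^ δ) volume (-1) 0 := by
      have := ((IntervalIntegrable.iff_comp_neg).mp h01).symm
      simpa using this
    have hI := hneg.trans h01
    exact (integrableOn_Icc_iff_integrableOn_Ioc).mpr hI.1
  have h2 : IntegrableOn (fun η : ℝ => 1 + |η| ^ δ) (Set.Icc (-1:ℝ) 1) :=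
    (integrableOn_const measure_Icc_lt_top.ne).add habs
  refine h2.congr_fun (fun x _ => ?_) measurableSet_Icc
  rw [aux_sq_rpow]

set_option maxHeartbeats 1000000 in
/-- For `c > 0`, `β ≥ 0`, `α ∈ ℝ`, `β' ≥ β` with `2β' - β + 1 - α > 0`, there is a constant
`C` such that for all `t ≥ 0` and all `ξ`, the `η`-integral of
`χ_{|ξ| ≤ A²} |ξ|^{β'} A^{-α} e^{-c ξ² t / A²}` over the region `A = √(ξ²+η²) ≤ 1` is bounded
by `C (1+t)^{-β/2}` (i.e. the `L^∞_ξ L^1_η` bound). -/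
theorem stmt5 (c α β β' : ℝ) (hc : 0 < c) (hβ : 0 ≤ β) (hββ' : β ≤ β')
    (hmain : 0 < 2 * β' - β + 1 - α) :
    ∃ C : ℝ, 0 < C ∧ ∀ t : ℝ, 0 ≤ t → ∀ ξ : ℝ,
      (∫ η in {η : ℝ | Real.sqrt (ξ ^ 2 + η ^ 2) ≤ 1 ∧ |ξ| ≤ ξ ^ 2 + η ^ 2},
          |ξ| ^ β' * (ξ ^ 2 + η ^ 2) ^ (-α / 2) *
            Real.exp (-c * ξ ^ 2 * t / (ξ ^ 2 + η ^ 2)))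
        ≤ C * (1 + t) ^ (-β / 2) := by
  obtain ⟨C₁, hC₁, hexp⟩ := aux_exp_bound β
  have hδ : (-1:ℝ) < 2*β' - β - α := by linarith
  set δ : ℝ := 2*β' - β - α with hδdef
  set K : ℝ := max 1 c⁻¹ with hKdef
  have hK1 : (1:ℝ) ≤ K := le_max_left _ _
  have hKc : (1:ℝ) ≤ K * c := by
    have h : c⁻¹ ≤ K := le_max_right _ _
    calc (1:ℝ) = c⁻¹ * c := (inv_mul_cancel₀ hc.ne').symm
      _ ≤ K * c := mul_le_mul_of_nonneg_right h hc.le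
  have hKb : (1:ℝ) ≤ K ^ (β/2) := Real.one_le_rpow hK1 (by positivity)
  set C₂ : ℝ := C₁ * K ^ (β/2) with hC2def
  have hC₂ : 1 ≤ C₂ := by nlinarith
  set G : ℝ → ℝ := fun η => 1 + (η^2) ^ (δ/2) with hGdef
  have hGnn : ∀ η, 0 ≤ G η := fun η => by
    have := Real.rpow_nonneg (sq_nonneg η) (δ/2)
    simp only [hGdef]; linarith
  have hGint : IntegrableOn G (Set.Icc (-1:ℝ) 1) := aux_G_integrable hδ
  set I : ℝ := ∫ η in Set.Icc (-1:ℝ) 1, G η with hIdef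
  have hI2 : 2 ≤ I := by
    have h1 : (∫ _η in Set.Icc (-1:ℝ) 1, (1:ℝ)) ≤ I := by
      refine setIntegral_mono_on (integrableOn_const measure_Icc_lt_top.ne)
        hGint measurableSet_Icc (fun x _ => ?_)
      have := Real.rpow_nonneg (sq_nonneg x) (δ/2)
      simp only [hGdef]; linarith
    rw [setIntegral_const] at h1
    rw [Real.volume_real_Icc_of_le (by norm_num)] at h1
    norm_num at h1
    linarith
  refine ⟨C₂ * I, by nlinarith, ?_⟩
  intro t ht ξ
  set S : Set ℝ := {η : ℝ | Real.sqrt (ξ ^ 2 + η ^ 2) ≤ 1 ∧ |ξ| ≤ ξ ^ 2 + η ^ 2} with hSdef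
  have hSm : MeasurableSet S := by
    rw [hSdef, Set.setOf_and]
    exact (measurableSet_le (by fun_prop) measurable_const).inter
      (measurableSet_le measurable_const (by fun_prop))
  have hSsub : S ⊆ Set.Icc (-1:ℝ) 1 := by
    intro η hη
    obtain ⟨h1, _h2⟩ := hη
    have hA2 : ξ^2 + η^2 ≤ 1 := by
      nlinarith [Real.sq_sqrt (show (0:ℝ) ≤ ξ^2+η^2 by positivity),
        Real.sqrt_nonneg (ξ^2+η^2)]
    constructor
    · nlinarith [sq_nonneg ξ, sq_nonneg (η+1)]
    · nlinarith [sq_nonneg ξ, sq_nonneg (η-1)]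
  set Dc : ℝ := C₂ * (1+t) ^ (-β / 2) with hDcdef
  have h1t : (0:ℝ) < 1 + t := by linarith
  have hDcpos : 0 < Dc := mul_pos (by linarith) (Real.rpow_pos_of_pos h1t _)
  have key : ∀ η ∈ S, η ≠ 0 →
      |ξ| ^ β' * (ξ ^ 2 + η ^ 2) ^ (-α / 2) *
        Real.exp (-c * ξ ^ 2 * t / (ξ ^ 2 + η ^ 2)) ≤ Dc * G η := by
    intro η hη hη0
    obtain ⟨hs1, hs2⟩ := hη
    have hA2pos : 0 < ξ^2 + η^2 := by positivity
    have hA2le1 : ξ^2 + η^2 ≤ 1 := by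
      nlinarith [Real.sq_sqrt hA2pos.le, Real.sqrt_nonneg (ξ^2+η^2)]
    have step6 : (ξ^2+η^2) ^ (δ/2) ≤ G η := by
      have hrnn : 0 ≤ (η^2 : ℝ) ^ (δ/2) := Real.rpow_nonneg (sq_nonneg η) _
      rcases le_or_gt 0 δ with hδ0 | hδ0
      · have h1 : (ξ^2+η^2) ^ (δ/2) ≤ 1 := Real.rpow_le_one hA2pos.le hA2le1 (by linarith)
        simp only [hGdef]; linarith
      · have hη2 : (0:ℝ) < η^2 := by positivity
        have h1 : (ξ^2+η^2) ^ (δ/2) ≤ (η^2) ^ (δ/2) :=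
          Real.rpow_le_rpow_of_nonpos hη2 (by nlinarith) (by linarith)
        simp only [hGdef]; linarith
    rcases eq_or_ne ξ 0 with hξ | hξ
    · rcases eq_or_ne β' 0 with hβ'0 | hβ'0
      · have hβ0 : β = 0 := le_antisymm (hβ'0 ▸ hββ') hβ
        have hδα : δ/2 = -α/2 := by rw [hδdef, hβ'0, hβ0]; ring
        have hDc1 : C₂ ≤ Dc := by
          rw [hDcdef, hβ0]
          norm_num
        have hlhs : |ξ| ^ β' * (ξ ^ 2 + η ^ 2) ^ (-α / 2) *
            Real.exp (-c * ξ ^ 2 * t / (ξ ^ 2 + η ^ 2)) = (ξ^2+η^2) ^ (δ/2) := by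
          rw [hξ, hβ'0, hδα]
          simp
        rw [hlhs]
        calc (ξ^2+η^2) ^ (δ/2) ≤ G η := step6
          _ = 1 * G η := (one_mul _).symm
          _ ≤ Dc * G η := mul_le_mul_of_nonneg_right (by linarith) (hGnn η)
      · have : |ξ| ^ β' = 0 := by rw [hξ, abs_zero, Real.zero_rpow hβ'0]
        rw [this, zero_mul, zero_mul]
        exact mul_nonneg hDcpos.le (hGnn η)
    · have hξpos : 0 < |ξ| := abs_pos.mpr hξ
      have hξ2pos : 0 < ξ^2 := by positivity
      set x : ℝ := c * ξ^2 * t / (ξ^2+η^2) with hxdef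
      have hx0 : 0 ≤ x := by positivity
      have harg : -c * ξ ^ 2 * t / (ξ ^ 2 + η ^ 2) = -x := by
        rw [hxdef]; ring
      have step1 : Real.exp (-x) ≤ C₁ * (1+x) ^ (-(β/2)) := hexp x hx0
      have h1x : (0:ℝ) < 1 + x := by linarith
      have hQ1 : (1:ℝ) ≤ (ξ^2+η^2)/ξ^2 := (one_le_div hξ2pos).mpr (by nlinarith)
      have hQpos : (0:ℝ) < K * ((ξ^2+η^2)/ξ^2) := by positivity
      have step2 : (1+t) ≤ (K * ((ξ^2+η^2)/ξ^2)) * (1+x) := by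
        have expand : (K * ((ξ^2+η^2)/ξ^2)) * (1+x)
            = K * ((ξ^2+η^2)/ξ^2) + K*c*t := by
          rw [hxdef]; field_simp
        rw [expand]
        have h2 : 1 ≤ K * ((ξ^2+η^2)/ξ^2) := by nlinarith
        have h3 : t ≤ K*c*t := by nlinarith
        linarith
      have step3 : (1+t) ^ (β/2) ≤ (K * ((ξ^2+η^2)/ξ^2)) ^ (β/2) * (1+x) ^ (β/2) := by
        calc (1+t) ^ (β/2) ≤ ((K * ((ξ^2+η^2)/ξ^2)) * (1+x)) ^ (β/2) :=
              Real.rpow_le_rpow h1t.le step2 (by positivity)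
          _ = _ := Real.mul_rpow hQpos.le h1x.le
      have step4 : Real.exp (-x) * (1+t) ^ (β/2) ≤ C₂ * ((ξ^2+η^2)/ξ^2) ^ (β/2) := by
        have h1 := mul_le_mul step1 step3 (Real.rpow_nonneg h1t.le _) (by positivity)
        have hcancel : (1+x) ^ (-(β/2)) * (1+x) ^ (β/2) = 1 := by
          rw [← Real.rpow_add h1x, show -(β/2) + β/2 = 0 by ring, Real.rpow_zero]
        have hKQ : (K * ((ξ^2+η^2)/ξ^2)) ^ (β/2) = K^(β/2) * ((ξ^2+η^2)/ξ^2)^(β/2) :=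
          Real.mul_rpow (by positivity) (by positivity)
        calc Real.exp (-x) * (1+t)^(β/2)
            ≤ (C₁ * (1+x)^(-(β/2))) * ((K * ((ξ^2+η^2)/ξ^2)) ^ (β/2) * (1+x)^(β/2)) := h1
          _ = C₁ * (K * ((ξ^2+η^2)/ξ^2)) ^ (β/2) * ((1+x)^(-(β/2)) * (1+x)^(β/2)) := by ring
          _ = C₂ * ((ξ^2+η^2)/ξ^2)^(β/2) := by
              rw [hcancel, hKQ, hC2def]; ring
      have hPcancel : (1+t) ^ (-β/2) * (1+t) ^ (β/2) = 1 := by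
        rw [← Real.rpow_add h1t, show -β/2 + β/2 = 0 by ring, Real.rpow_zero]
      have step5 : Real.exp (-x) ≤ C₂ * ((ξ^2+η^2)/ξ^2) ^ (β/2) * (1+t) ^ (-β/2) := by
        have h := mul_le_mul_of_nonneg_right step4
          (Real.rpow_nonneg h1t.le (-β/2))
        calc Real.exp (-x)
            = Real.exp (-x) * ((1+t)^(β/2) * (1+t)^(-β/2)) := by
              rw [mul_comm ((1+t)^(β/2)), hPcancel, mul_one]
          _ = (Real.exp (-x) * (1+t)^(β/2)) * (1+t)^(-β/2) := by ring
          _ ≤ (C₂ * ((ξ^2+η^2)/ξ^2)^(β/2)) * (1+t)^(-β/2) := h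
      have hQrw : ((ξ^2+η^2)/ξ^2) ^ (β/2) = (ξ^2+η^2)^(β/2) / |ξ|^β := by
        rw [Real.div_rpow hA2pos.le (sq_nonneg ξ), aux_sq_rpow]
      have hfinal : |ξ|^β' * (ξ^2+η^2)^(-α/2) * ((ξ^2+η^2)/ξ^2)^(β/2)
          ≤ (ξ^2+η^2)^(δ/2) := by
        rw [hQrw]
        have e1 : |ξ|^β' * (ξ^2+η^2)^(-α/2) * ((ξ^2+η^2)^(β/2) / |ξ|^β)
            = (|ξ|^β' / |ξ|^β) * ((ξ^2+η^2)^(-α/2) * (ξ^2+η^2)^(β/2)) := by ring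
        rw [e1, ← Real.rpow_sub hξpos, ← Real.rpow_add hA2pos]
        have e2 : |ξ|^(β'-β) ≤ (ξ^2+η^2)^(β'-β) :=
          Real.rpow_le_rpow (abs_nonneg _) hs2 (by linarith)
        have e3 : (0:ℝ) ≤ (ξ^2+η^2)^(-α/2 + β/2) := Real.rpow_nonneg hA2pos.le _
        calc |ξ|^(β'-β) * (ξ^2+η^2)^(-α/2 + β/2)
            ≤ (ξ^2+η^2)^(β'-β) * (ξ^2+η^2)^(-α/2 + β/2) :=
              mul_le_mul_of_nonneg_right e2 e3
          _ = (ξ^2+η^2)^((β'-β) + (-α/2 + β/2)) := (Real.rpow_add hA2pos _ _).symm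
          _ = (ξ^2+η^2)^(δ/2) := by
              congr 1
              rw [hδdef]; ring
      have hexpnn : (0:ℝ) ≤ (ξ^2+η^2)^(-α/2) := Real.rpow_nonneg hA2pos.le _
      have hbn : -α / 2 = -α/2 := rfl
      have hmb : (-β:ℝ) / 2 = -β/2 := rfl
      calc |ξ| ^ β' * (ξ ^ 2 + η ^ 2) ^ (-α / 2) *
            Real.exp (-c * ξ ^ 2 * t / (ξ ^ 2 + η ^ 2))
          = |ξ| ^ β' * (ξ^2+η^2) ^ (-α/2) * Real.exp (-x) := by rw [harg]
        _ ≤ |ξ| ^ β' * (ξ^2+η^2) ^ (-α/2) *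
              (C₂ * ((ξ^2+η^2)/ξ^2)^(β/2) * (1+t)^(-β/2)) := by
            refine mul_le_mul_of_nonneg_left step5 ?_
            exact mul_nonneg (Real.rpow_nonneg (abs_nonneg _) _) hexpnn
        _ = (C₂ * (1+t)^(-β/2)) * (|ξ|^β' * (ξ^2+η^2)^(-α/2) * ((ξ^2+η^2)/ξ^2)^(β/2)) := by
            ring
        _ ≤ (C₂ * (1+t)^(-β/2)) * (ξ^2+η^2)^(δ/2) := by
            refine mul_le_mul_of_nonneg_left hfinal ?_
            exact mul_nonneg (by linarith) (Real.rpow_nonneg h1t.le _)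
        _ ≤ (C₂ * (1+t)^(-β/2)) * G η := by
            refine mul_le_mul_of_nonneg_left step6 ?_
            exact mul_nonneg (by linarith) (Real.rpow_nonneg h1t.le _)
        _ = Dc * G η := by rw [hDcdef]
  -- measurability
  have hfmeas : Measurable (fun η : ℝ => |ξ| ^ β' * (ξ ^ 2 + η ^ 2) ^ (-α / 2) *
      Real.exp (-c * ξ ^ 2 * t / (ξ ^ 2 + η ^ 2))) := by
    fun_prop
  have hne0 : ∀ᵐ η ∂(volume.restrict S), η ≠ 0 := by
    refine ae_restrict_of_ae ?_
    rw [ae_iff]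
    simp only [not_not, Set.setOf_eq_eq_singleton]
    exact measure_singleton 0
  have hmem : ∀ᵐ η ∂(volume.restrict S), η ∈ S := ae_restrict_mem hSm
  have hae : ∀ᵐ η ∂(volume.restrict S),
      |ξ| ^ β' * (ξ ^ 2 + η ^ 2) ^ (-α / 2) *
        Real.exp (-c * ξ ^ 2 * t / (ξ ^ 2 + η ^ 2)) ≤ Dc * G η := by
    filter_upwards [hne0, hmem] with η h1 h2
    exact key η h2 h1
  have hGS : IntegrableOn G S := hGint.mono_set hSsub
  have hbound : IntegrableOn (fun η => Dc * G η) S := hGS.const_mul Dc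
  have hfS : IntegrableOn (fun η : ℝ => |ξ| ^ β' * (ξ ^ 2 + η ^ 2) ^ (-α / 2) *
      Real.exp (-c * ξ ^ 2 * t / (ξ ^ 2 + η ^ 2))) S := by
    refine Integrable.mono' hbound hfmeas.aestronglyMeasurable ?_
    filter_upwards [hae] with η h1
    rw [Real.norm_eq_abs, abs_of_nonneg]
    · exact h1
    · have : (0:ℝ) ≤ (ξ^2+η^2) ^ (-α/2) := Real.rpow_nonneg (by positivity) _
      have h2 : (0:ℝ) ≤ |ξ| ^ β' := Real.rpow_nonneg (abs_nonneg _) _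
      positivity
  calc (∫ η in S, |ξ| ^ β' * (ξ ^ 2 + η ^ 2) ^ (-α / 2) *
          Real.exp (-c * ξ ^ 2 * t / (ξ ^ 2 + η ^ 2)))
      ≤ ∫ η in S, Dc * G η := integral_mono_ae hfS hbound hae
    _ ≤ ∫ η in Set.Icc (-1:ℝ) 1, Dc * G η := by
        refine setIntegral_mono_set (hGint.const_mul Dc) ?_
          (HasSubset.Subset.eventuallyLE hSsub)
        exact Filter.Eventually.of_forall (fun η => mul_nonneg hDcpos.le (hGnn η))
    _ = Dc * I := by rw [hIdef, ← integral_const_mul]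
    _ = (C₂ * I) * (1+t) ^ (-β / 2) := by rw [hDcdef]; ring
end

section
/- Let ξ, η ∈ ℝ, A = √(ξ²+η²) > 0. If (1/4)A⁴ - A² + A|η| ≥ (1/36)A⁴, then -2ξ²/A² ≤ -A²/2 + √((1/4)A⁴ - A² + A|η|) ≤ -ξ²/(2A²). -/
/-- For `(ξ, η) ≠ (0,0)`, `A = √(ξ²+η²)`: if `(1/4)A⁴ - A² + A|η| ≥ (1/36)A⁴` then
`-2ξ²/A² ≤ -A²/2 + √((1/4)A⁴ - A² + A|η|) ≤ -ξ²/(2A²)`. -/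
theorem stmt9 (ξ η A : ℝ) (hA : A = Real.sqrt (ξ ^ 2 + η ^ 2)) (h : (ξ, η) ≠ (0, 0))
    (hyp : (1 / 36) * A ^ 4 ≤ (1 / 4) * A ^ 4 - A ^ 2 + A * |η|) :
    -2 * ξ ^ 2 / A ^ 2 ≤ -A ^ 2 / 2 + Real.sqrt ((1 / 4) * A ^ 4 - A ^ 2 + A * |η|) ∧
    -A ^ 2 / 2 + Real.sqrt ((1 / 4) * A ^ 4 - A ^ 2 + A * |η|) ≤ -ξ ^ 2 / (2 * A ^ 2) := by
  have hne : ξ ^ 2 + η ^ 2 ≠ 0 := by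
    intro h0
    apply h
    have hξ : ξ = 0 := by nlinarith [sq_nonneg ξ, sq_nonneg η]
    have hη : η = 0 := by nlinarith [sq_nonneg ξ, sq_nonneg η]
    simp [hξ, hη]
  have hpos : 0 < ξ ^ 2 + η ^ 2 := lt_of_le_of_ne (by positivity) (Ne.symm hne)
  have hApos : 0 < A := by rw [hA]; exact Real.sqrt_pos.mpr hpos
  have hA2 : A ^ 2 = ξ ^ 2 + η ^ 2 := by
    rw [hA, Real.sq_sqrt hpos.le]
  have hηA : |η| ≤ A := by
    nlinarith [sq_abs η, sq_nonneg ξ, abs_nonneg η, hApos]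
  set D := (1 / 4) * A ^ 4 - A ^ 2 + A * |η| with hD
  have hDnn : 0 ≤ D := le_trans (by positivity) hyp
  set s := Real.sqrt D with hsdef
  have hs2 : s ^ 2 = D := Real.sq_sqrt hDnn
  have hsnn : 0 ≤ s := Real.sqrt_nonneg D
  have hs_lb : A ^ 2 / 6 ≤ s := by
    have h1 : Real.sqrt ((1 / 36) * A ^ 4) ≤ s := Real.sqrt_le_sqrt hyp
    have h2 : Real.sqrt ((1 / 36) * A ^ 4) = A ^ 2 / 6 := by
      rw [show (1 / 36) * A ^ 4 = (A ^ 2 / 6) ^ 2 by ring]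
      exact Real.sqrt_sq (by positivity)
    linarith [h1, h2.symm.le, h2.le]
  have hs_ub : s ≤ A ^ 2 / 2 := by
    have h1 : D ≤ (A ^ 2 / 2) ^ 2 := by
      rw [hD]
      nlinarith [mul_le_mul_of_nonneg_left hηA hApos.le]
    calc s ≤ Real.sqrt ((A ^ 2 / 2) ^ 2) := Real.sqrt_le_sqrt h1
      _ = A ^ 2 / 2 := Real.sqrt_sq (by positivity)
  have key : (s ^ 2 - A ^ 4 / 4) * (A + |η|) = -A * ξ ^ 2 := by
    have hab : |η| ^ 2 = η ^ 2 := sq_abs η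
    rw [hs2, hD]
    nlinarith [hA2, hab]
  have key' : (A ^ 2 / 2 - s) * ((A ^ 2 / 2 + s) * (A + |η|)) = A * ξ ^ 2 := by
    linear_combination -key
  have ht : 0 ≤ A ^ 2 / 2 - s := by linarith
  have hPnn : (0:ℝ) ≤ A ^ 2 / 2 + s := by positivity
  have hQnn : (0:ℝ) ≤ A + |η| := by positivity
  have hPQlb : (2 * A ^ 2 / 3) * A ≤ (A ^ 2 / 2 + s) * (A + |η|) := by
    apply mul_le_mul (by linarith) (by linarith [abs_nonneg η]) hApos.le hPnn
  have hPQub : (A ^ 2 / 2 + s) * (A + |η|) ≤ A ^ 2 * (2 * A) := by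
    apply mul_le_mul (by linarith) (by linarith) hQnn (by positivity)
  have hA2pos : (0:ℝ) < A ^ 2 := by positivity
  clear_value s D
  clear hsdef hD hA h hyp hs2 key hne
  constructor
  · rw [div_le_iff₀ hA2pos]
    have h1 : (A ^ 2 / 2 - s) * (A ^ 3) ≤ (A ^ 2 / 2 - s) * (2 * ((A ^ 2 / 2 + s) * (A + |η|))) := by
      apply mul_le_mul_of_nonneg_left _ ht
      nlinarith [hPQlb]
    have h3 : ((A ^ 2 / 2 - s) * A ^ 2) * A ≤ (2 * ξ ^ 2) * A := by linarith [h1, key']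
    have h4 : (A ^ 2 / 2 - s) * A ^ 2 ≤ 2 * ξ ^ 2 := le_of_mul_le_mul_right h3 hApos
    linarith [h4]
  · rw [le_div_iff₀ (by positivity : (0:ℝ) < 2 * A ^ 2)]
    have h2 : (A ^ 2 / 2 - s) * ((A ^ 2 / 2 + s) * (A + |η|)) ≤ (A ^ 2 / 2 - s) * (A ^ 2 * (2 * A)) :=
      mul_le_mul_of_nonneg_left hPQub ht
    have h3 : ξ ^ 2 * A ≤ ((A ^ 2 / 2 - s) * (2 * A ^ 2)) * A := by linarith [h2, key']
    have h4 : ξ ^ 2 ≤ (A ^ 2 / 2 - s) * (2 * A ^ 2) := le_of_mul_le_mul_right h3 hApos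
    linarith [h4]
end

section
/- Let ξ, η ∈ ℝ, A = √(ξ²+η²). If A|η| ≤ (1/2)A² and (1/4)A⁴ - A² + A|η| ≥ 0, then A ≥ 1 and -A²/2 + √((1/4)A⁴ - A² + A|η|) ≤ -1/2. -/
/-- For `(ξ, η) ≠ (0,0)`, `A = √(ξ²+η²)`: if `A|η| ≤ (1/2)A²` and
`(1/4)A⁴ - A² + A|η| ≥ 0`, then `A ≥ 1` and
`-A²/2 + √((1/4)A⁴ - A² + A|η|) ≤ -1/2`. -/
theorem stmt10 (ξ η A : ℝ) (hA : A = Real.sqrt (ξ ^ 2 + η ^ 2)) (hne : (ξ, η) ≠ (0, 0))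
    (h1 : A * |η| ≤ (1 / 2) * A ^ 2) (h2 : 0 ≤ (1 / 4) * A ^ 4 - A ^ 2 + A * |η|) :
    1 ≤ A ∧ -A ^ 2 / 2 + Real.sqrt ((1 / 4) * A ^ 4 - A ^ 2 + A * |η|) ≤ -(1 / 2) := by
  have hpos : 0 < ξ ^ 2 + η ^ 2 := by
    have : ξ ≠ 0 ∨ η ≠ 0 := by
      by_contra h
      push_neg at h
      exact hne (by simp [h.1, h.2])
    rcases this with h | h <;> positivity
  have hApos : 0 < A := hA ▸ Real.sqrt_pos.mpr hpos
  have hA2 : 2 ≤ A ^ 2 := by nlinarith [mul_pos hApos hApos]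
  have hA1 : 1 ≤ A := by nlinarith
  refine ⟨hA1, ?_⟩
  have hb : 0 ≤ A ^ 2 / 2 - 1 / 2 := by nlinarith
  have hle : (1 / 4) * A ^ 4 - A ^ 2 + A * |η| ≤ (A ^ 2 / 2 - 1 / 2) ^ 2 := by nlinarith
  have := Real.sqrt_le_sqrt hle
  rw [Real.sqrt_sq hb] at this
  linarith
end
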